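/- For every integer k ≥ 1 and integer z ≥ k, the binomial cumulative distribution satisfies B_{z,k}(k/z) > 1/2. -/

import Mathlib

section BinomialMedian
open Finset

/-- The (scaled) binomial weights: `a j = C(n,j) k^j m^(n-j)` with `n = k+m`, as integers. -/
def aa (k m j : ℕ) : ℤ := ((k+m).choose j : ℤ) * (k:ℤ)^j * (m:ℤ)^(k+m-j)

lemma aa_nonneg (k m j : ℕ) : 0 ≤ aa k m j := by
  unfold aa; positivity

lemma aa_pos (k m j : ℕ) (hk : 1 ≤ k) (hm : 1 ≤ m) (hj : j ≤ k + m) : 0 < aa k m j := by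
  unfold aa
  have h1 : 0 < (k+m).choose j := Nat.choose_pos hj
  have : (0:ℤ) < ((k+m).choose j : ℤ) := by exact_mod_cast h1
  have hk' : (0:ℤ) < (k:ℤ) := by exact_mod_cast hk
  have hm' : (0:ℤ) < (m:ℤ) := by exact_mod_cast hm
  positivity

/-- the fundamental ratio relation: `a (s+1) * (s+1) * m = a s * (n-s) * k`. -/
lemma aa_rel (k m s : ℕ) (hs : s < k + m) :
    aa k m (s+1) * (s+1) * m = aa k m s * ((k+m) - s : ℕ) * k := by
  unfold aa
  have h := Nat.choose_succ_right_eq (k+m) s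
  have hpow : (m:ℤ)^(k+m-s) = (m:ℤ)^(k+m-(s+1)) * m := by
    rw [← pow_succ]
    congr 1
    omega
  have hc : (((k+m).choose (s+1) : ℤ)) * (s+1) = ((k+m).choose s : ℤ) * ((k+m) - s : ℕ) := by
    exact_mod_cast congrArg (Nat.cast : ℕ → ℤ) h
  calc ((k+m).choose (s+1) : ℤ) * (k:ℤ)^(s+1) * (m:ℤ)^(k+m-(s+1)) * (s+1) * m
      = (((k+m).choose (s+1) : ℤ) * (s+1)) * ((k:ℤ)^(s+1) * ((m:ℤ)^(k+m-(s+1)) * m)) := by ring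
    _ = (((k+m).choose s : ℤ) * ((k+m) - s : ℕ)) * ((k:ℤ)^(s+1) * (m:ℤ)^(k+m-s)) := by
        rw [hc, hpow]
    _ = ((k+m).choose s : ℤ) * (k:ℤ)^s * (m:ℤ)^(k+m-s) * ((k+m) - s : ℕ) * k := by
        rw [pow_succ]; ring

/-- total mass: `∑ a j = n^n`. -/
lemma aa_total (k m : ℕ) :
    ∑ j ∈ range (k+m+1), aa k m j = ((k+m : ℕ) : ℤ)^(k+m) := by
  have h := add_pow (k:ℤ) (m:ℤ) (k+m)
  push_cast
  rw [h]
  unfold aa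
  apply Finset.sum_congr rfl
  intro j _
  push_cast
  ring

/-- mean identity: `∑ j * a j = k * n^n`. -/
lemma aa_mean (k m : ℕ) (hk : 1 ≤ k) :
    ∑ j ∈ range (k+m+1), (j:ℤ) * aa k m j = (k:ℤ) * ((k+m:ℕ):ℤ)^(k+m) := by
  set n := k + m with hn
  have key : ∀ s, s < n → ((s:ℤ)+1) * aa k m (s+1)
      = (n:ℤ) * (k:ℤ) * (((n-1).choose s : ℤ) * (k:ℤ)^s * (m:ℤ)^(n-1-s)) := by
    intro s hs
    have h : (n-1).succ * (n-1).choose s = (n-1).succ.choose (s+1) * (s+1) :=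
      Nat.add_one_mul_choose_eq (n-1) s
    have hn1 : (n-1).succ = n := by omega
    rw [hn1] at h
    have hc : (n:ℤ) * ((n-1).choose s : ℤ) = (n.choose (s+1) : ℤ) * ((s:ℤ)+1) := by
      exact_mod_cast congrArg (Nat.cast : ℕ → ℤ) h
    unfold aa
    have hexp : n - (s+1) = n - 1 - s := by omega
    rw [← hn, hexp]
    calc ((s:ℤ)+1) * ((n.choose (s+1) : ℤ) * (k:ℤ)^(s+1) * (m:ℤ)^(n-1-s))
        = ((n.choose (s+1) : ℤ) * ((s:ℤ)+1)) * ((k:ℤ)^(s+1) * (m:ℤ)^(n-1-s)) := by ring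
      _ = ((n:ℤ) * ((n-1).choose s : ℤ)) * ((k:ℤ)^(s+1) * (m:ℤ)^(n-1-s)) := by rw [hc]
      _ = (n:ℤ) * (k:ℤ) * (((n-1).choose s : ℤ) * (k:ℤ)^s * (m:ℤ)^(n-1-s)) := by
          rw [pow_succ]; ring
  rw [Finset.sum_range_succ']
  simp only [Nat.cast_zero, zero_mul, add_zero]
  have : ∀ s ∈ range n, ((s:ℤ)+1) * aa k m (s+1)
      = (n:ℤ) * (k:ℤ) * (((n-1).choose s : ℤ) * (k:ℤ)^s * (m:ℤ)^(n-1-s)) := by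
    intro s hs; exact key s (mem_range.mp hs)
  calc ∑ s ∈ range n, ((s:ℤ)+1) * aa k m (s+1)
      = ∑ s ∈ range n, (n:ℤ) * (k:ℤ) * (((n-1).choose s : ℤ) * (k:ℤ)^s * (m:ℤ)^(n-1-s)) :=
        Finset.sum_congr rfl this
    _ = (n:ℤ) * (k:ℤ) * ∑ s ∈ range n, (((n-1).choose s : ℤ) * (k:ℤ)^s * (m:ℤ)^(n-1-s)) := by
        rw [Finset.mul_sum]
    _ = (n:ℤ) * (k:ℤ) * ((k:ℤ)+(m:ℤ))^(n-1) := by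
        congr 1
        have h := add_pow (k:ℤ) (m:ℤ) (n-1)
        rw [h]
        have hr : n = (n-1) + 1 := by omega
        rw [hr]
        apply Finset.sum_congr rfl
        intro j _
        push_cast
        ring
    _ = (k:ℤ) * ((n:ℕ):ℤ)^n := by
        have : ((k:ℤ)+(m:ℤ)) = (n:ℤ) := by push_cast [hn]; ring
        rw [this]
        push_cast
        have hr : (n:ℤ)^n = (n:ℤ)^(n-1) * (n:ℤ) := by
          rw [← pow_succ]
          congr 1
          omega
        rw [hr]
        ring

/-- condition `Q i`:  k·m·(m-k) ≤ i(i+1)(m²-k²). -/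
def QA (k m i : ℕ) : Prop :=
  (k:ℤ)*(m:ℤ)*((m:ℤ)-(k:ℤ)) ≤ (i:ℤ)*((i:ℤ)+1)*((m:ℤ)^2-(k:ℤ)^2)

lemma QA_mono (k m i i' : ℕ) (hkm : k ≤ m) (h : i ≤ i') (hq : QA k m i) : QA k m i' := by
  unfold QA at *
  have h1 : (i:ℤ)*((i:ℤ)+1) ≤ (i':ℤ)*((i':ℤ)+1) := by
    have : (i:ℤ) ≤ (i':ℤ) := by exact_mod_cast h
    nlinarith [Int.natCast_nonneg i, Int.natCast_nonneg i']
  have h2 : (0:ℤ) ≤ (m:ℤ)^2-(k:ℤ)^2 := by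
    have : (k:ℤ) ≤ (m:ℤ) := by exact_mod_cast hkm
    nlinarith [Int.natCast_nonneg k]
  calc (k:ℤ)*(m:ℤ)*((m:ℤ)-(k:ℤ)) ≤ (i:ℤ)*((i:ℤ)+1)*((m:ℤ)^2-(k:ℤ)^2) := hq
    _ ≤ (i':ℤ)*((i':ℤ)+1)*((m:ℤ)^2-(k:ℤ)^2) := mul_le_mul_of_nonneg_right h1 h2

/-- the common setup for one step of the pair comparison `(k-i, k+i) → (k-i-1, k+i+1)`. -/
lemma step_core (k m i : ℕ) (hk : 1 ≤ k) (hkm : k ≤ m) (hi : 1 ≤ i) (hik : i + 1 ≤ k) :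
    ∃ W A B : ℤ, 0 < W ∧ 0 ≤ A ∧ 0 ≤ B ∧
      aa k m (k-i-1) * W = aa k m (k-i) * A ∧
      aa k m (k+i+1) * W = aa k m (k+i) * B ∧
      (QA k m i → A ≤ B) ∧ (¬ QA k m i → B < A) := by
  obtain ⟨u, hu⟩ : ∃ u, k = i + u + 1 := ⟨k - i - 1, by omega⟩
  obtain ⟨v, hv1, hv2⟩ : ∃ v, m = i + v ∧ 1 ≤ v := ⟨m - i, by omega, by omega⟩
  have hK : (0:ℤ) < (k:ℤ) := by exact_mod_cast hk
  have hM : (0:ℤ) < (m:ℤ) := by exact_mod_cast (le_trans hk hkm)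
  have hkm' : (k:ℤ) ≤ (m:ℤ) := by exact_mod_cast hkm
  have hkeq : (k:ℤ) = (i:ℤ)+(u:ℤ)+1 := by exact_mod_cast congrArg (Nat.cast (R := ℤ)) hu
  have hmeq : (m:ℤ) = (i:ℤ)+(v:ℤ) := by exact_mod_cast congrArg (Nat.cast (R := ℤ)) hv1
  have hv2' : (1:ℤ) ≤ (v:ℤ) := by exact_mod_cast hv2
  have hI : (0:ℤ) ≤ (i:ℤ) := Int.natCast_nonneg i
  -- rel at s = u  (note k-i = u+1, k-i-1 = u, k+m-u = m+i+1)
  have r1 := aa_rel k m u (by omega)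
  have s1 : (k + m - u : ℕ) = m + i + 1 := by omega
  rw [s1] at r1
  have r1' : aa k m (u+1) * ((u:ℤ)+1) * (m:ℤ) = aa k m u * ((m:ℤ)+(i:ℤ)+1) * (k:ℤ) := by
    exact_mod_cast r1
  -- rel at s = k+i  (k+m-(k+i) = v)
  have r2 := aa_rel k m (k+i) (by omega)
  have s2 : (k + m - (k+i) : ℕ) = v := by omega
  rw [s2] at r2
  have r2' : aa k m (k+i+1) * ((k:ℤ)+(i:ℤ)+1) * (m:ℤ) = aa k m (k+i) * (v:ℤ) * (k:ℤ) := by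
    exact_mod_cast r2
  refine ⟨((m:ℤ)+(i:ℤ)+1) * (k:ℤ) * (((k:ℤ)+(i:ℤ)+1) * (m:ℤ)),
    ((u:ℤ)+1) * (((k:ℤ)+(i:ℤ)+1) * (m:ℤ)^2),
    (v:ℤ) * (((m:ℤ)+(i:ℤ)+1) * (k:ℤ)^2), by positivity, by positivity, by positivity, ?_, ?_, ?_, ?_⟩
  · have e : k - i - 1 = u := by omega
    have e2 : k - i = u + 1 := by omega
    rw [e, e2]
    linear_combination (-(((k:ℤ)+(i:ℤ)+1) * (m:ℤ))) * r1'
  · linear_combination (((m:ℤ)+(i:ℤ)+1) * (k:ℤ)) * r2'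
  · intro hq
    unfold QA at hq
    have e1' : ((u:ℤ)+1) = (k:ℤ)-(i:ℤ) := by linarith [hkeq]
    have e2' : (v:ℤ) = (m:ℤ)-(i:ℤ) := by linarith [hmeq]
    rw [e1', e2']
    linarith [hq]
  · intro hq
    unfold QA at hq
    push_neg at hq
    have e1' : ((u:ℤ)+1) = (k:ℤ)-(i:ℤ) := by linarith [hkeq]
    have e2' : (v:ℤ) = (m:ℤ)-(i:ℤ) := by linarith [hmeq]
    rw [e1', e2']
    linarith [hq]

lemma stepA (k m i : ℕ) (hk : 1 ≤ k) (hkm : k ≤ m) (hi : 1 ≤ i) (hik : i + 1 ≤ k)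
    (hq : QA k m i) (h : aa k m (k-i) ≤ aa k m (k+i)) :
    aa k m (k-i-1) ≤ aa k m (k+i+1) := by
  obtain ⟨W, A, B, hW, hA, hB, e1, e2, hAB, _⟩ := step_core k m i hk hkm hi hik
  have : aa k m (k-i-1) * W ≤ aa k m (k+i+1) * W := by
    rw [e1, e2]
    calc aa k m (k-i) * A ≤ aa k m (k+i) * A := mul_le_mul_of_nonneg_right h hA
      _ ≤ aa k m (k+i) * B := mul_le_mul_of_nonneg_left (hAB hq) (aa_nonneg k m (k+i))
  exact le_of_mul_le_mul_right this hW

lemma revA (k m i : ℕ) (hk : 1 ≤ k) (hkm : k ≤ m) (hi : 1 ≤ i) (hik : i + 1 ≤ k)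
    (hq : ¬ QA k m i) (h : aa k m (k+i) ≤ aa k m (k-i)) :
    aa k m (k+i+1) < aa k m (k-i-1) := by
  obtain ⟨W, A, B, hW, hA, hB, e1, e2, _, hBA⟩ := step_core k m i hk hkm hi hik
  have hm : 1 ≤ m := le_trans hk hkm
  have hpos : 0 < aa k m (k-i) := aa_pos k m (k-i) hk hm (by omega)
  have : aa k m (k+i+1) * W < aa k m (k-i-1) * W := by
    rw [e1, e2]
    calc aa k m (k+i) * B ≤ aa k m (k-i) * B := mul_le_mul_of_nonneg_right h hB
      _ < aa k m (k-i) * A := mul_lt_mul_of_pos_left (hBA hq) hpos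
  exact lt_of_mul_lt_mul_right this (le_of_lt hW)

/-- first pair: `aa (k+1) ≤ aa (k-1)` when `k ≤ m`. -/
lemma pair_one (k m : ℕ) (hk : 1 ≤ k) (hkm : k ≤ m) :
    aa k m (k+1) ≤ aa k m (k-1) := by
  have hm : 1 ≤ m := le_trans hk hkm
  obtain ⟨u, hu⟩ : ∃ u, k = u + 1 := ⟨k-1, by omega⟩
  have r1 := aa_rel k m u (by omega)
  have s1 : (k + m - u : ℕ) = m + 1 := by omega
  rw [s1] at r1
  have r2 := aa_rel k m k (by omega)
  have s2 : (k + m - k : ℕ) = m := by omega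
  rw [s2] at r2
  have r1' : aa k m (u+1) * ((u:ℤ)+1) * (m:ℤ) = aa k m u * ((m:ℤ)+1) * (k:ℤ) := by
    exact_mod_cast r1
  have r2' : aa k m (k+1) * ((k:ℤ)+1) * (m:ℤ) = aa k m k * (m:ℤ) * (k:ℤ) := by
    exact_mod_cast r2
  have hK : (0:ℤ) < (k:ℤ) := by exact_mod_cast hk
  have hM : (0:ℤ) < (m:ℤ) := by exact_mod_cast hm
  have hkm' : (k:ℤ) ≤ (m:ℤ) := by exact_mod_cast hkm
  have hkeq : (k:ℤ) = (u:ℤ)+1 := by exact_mod_cast congrArg (Nat.cast (R := ℤ)) hu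
  have hknn : 0 ≤ aa k m k := aa_nonneg k m k
  have e : k - 1 = u := by omega
  rw [e]
  have hu1 : u + 1 = k := by omega
  rw [hu1] at r1'
  -- cancel to get clean ratio identities
  have h2 : aa k m k * (m:ℤ) = aa k m u * ((m:ℤ)+1) := by
    apply mul_right_cancel₀ (ne_of_gt hK)
    linear_combination r1' + aa k m k * (m:ℤ) * hkeq
  have h3 : aa k m (k+1) * ((k:ℤ)+1) = aa k m k * (k:ℤ) := by
    apply mul_right_cancel₀ (ne_of_gt hM)
    linear_combination r2'
  have key : aa k m (k+1) * (((k:ℤ)+1) * ((m:ℤ)+1))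
      ≤ aa k m u * (((k:ℤ)+1) * ((m:ℤ)+1)) := by
    have lhs_eq : aa k m (k+1) * (((k:ℤ)+1) * ((m:ℤ)+1)) = aa k m k * ((k:ℤ)*((m:ℤ)+1)) := by
      linear_combination ((m:ℤ)+1) * h3
    have rhs_eq : aa k m u * (((k:ℤ)+1) * ((m:ℤ)+1)) = aa k m k * ((m:ℤ)*((k:ℤ)+1)) := by
      linear_combination (-((k:ℤ)+1)) * h2
    rw [lhs_eq, rhs_eq]
    apply mul_le_mul_of_nonneg_left _ hknn
    linarith [hkm']
  exact le_of_mul_le_mul_right key (by positivity)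

lemma pairB (k m : ℕ) (hk : 1 ≤ k) (hkm : k ≤ m) :
    ∀ t, t < k → aa k m (k-1-t) < aa k m (k+t) := by
  have hm : 1 ≤ m := le_trans hk hkm
  intro t
  induction t with
  | zero =>
    intro ht
    -- aa (k-1) < aa k
    obtain ⟨u, hu⟩ : ∃ u, k = u + 1 := ⟨k-1, by omega⟩
    have hrel := aa_rel k m u (by omega)
    have hsub : (k + m - u : ℕ) = m + 1 := by omega
    rw [hsub] at hrel
    have hx : k - 1 - 0 = u := by omega
    have hy : k + 0 = u + 1 := by omega
    rw [hx, hy]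
    have hpos : 0 < aa k m (u+1) := aa_pos k m (u+1) hk hm (by omega)
    have hk' : (0:ℤ) < (k:ℤ) := by exact_mod_cast hk
    -- hrel : aa (u+1) * (u+1) * m = aa u * (m+1) * k,  and u+1 = k
    have hk1 : ((u:ℤ)+1) = (k:ℤ) := by exact_mod_cast congrArg (Nat.cast (R := ℤ)) hy.symm
    have h1 : aa k m (u+1) * (m:ℤ) * (k:ℤ) = aa k m u * ((m:ℤ)+1) * (k:ℤ) := by
      have h' := hrel
      push_cast at h'
      linear_combination h' - aa k m (u+1) * (m:ℤ) * hk1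
    have h2 : aa k m (u+1) * (m:ℤ) = aa k m u * ((m:ℤ)+1) := by
      exact mul_right_cancel₀ (ne_of_gt hk') h1
    have hM : (0:ℤ) < (m:ℤ) := by exact_mod_cast hm
    nlinarith [hpos, h2, hM]
  | succ t ih =>
    intro ht
    have hprev : aa k m (k-1-t) < aa k m (k+t) := ih (by omega)
    obtain ⟨u, hu⟩ : ∃ u, k = (t+1) + u + 1 := ⟨k - t - 2, by omega⟩
    obtain ⟨w, hw1, hw2⟩ : ∃ w, m = (t+1) + w ∧ 1 ≤ w := ⟨m - t - 1, by omega, by omega⟩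
    have e1 : k - 1 - t = u + 1 := by omega
    have e2 : k - 1 - (t+1) = u := by omega
    rw [e1] at hprev
    rw [e2]
    have r1 := aa_rel k m u (by omega)
    have s1 : (k + m - u : ℕ) = m + (t+1) + 1 := by omega
    rw [s1] at r1
    have r2 := aa_rel k m (k+t) (by omega)
    have s2 : (k + m - (k+t) : ℕ) = w + 1 := by omega
    rw [s2] at r2
    have hxpos : 0 < aa k m (u+1) := aa_pos k m (u+1) hk hm (by omega)
    have hK : (0:ℤ) < (k:ℤ) := by exact_mod_cast hk
    have hM : (0:ℤ) < (m:ℤ) := by exact_mod_cast hm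
    have hkm' : (k:ℤ) ≤ (m:ℤ) := by exact_mod_cast hkm
    have hkeq : (k:ℤ) = (t:ℤ)+1+(u:ℤ)+1 := by exact_mod_cast congrArg (Nat.cast (R := ℤ)) hu
    have hmeq : (m:ℤ) = (t:ℤ)+1+(w:ℤ) := by exact_mod_cast congrArg (Nat.cast (R := ℤ)) hw1
    have hw1' : (1:ℤ) ≤ (w:ℤ) := by exact_mod_cast hw2
    have r1' : aa k m (u+1) * ((u:ℤ)+1) * (m:ℤ)
        = aa k m u * ((m:ℤ)+((t:ℤ)+1)+1) * (k:ℤ) := by exact_mod_cast r1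
    have r2' : aa k m (k+t+1) * ((k:ℤ)+(t:ℤ)+1) * (m:ℤ)
        = aa k m (k+t) * ((w:ℤ)+1) * (k:ℤ) := by exact_mod_cast r2
    clear r1 r2
    have hA : ((t:ℤ)+1)^2 * (k:ℤ)^2 ≤ ((t:ℤ)+1)^2 * (m:ℤ)^2 :=
      mul_le_mul_of_nonneg_left (pow_le_pow_left₀ (le_of_lt hK) hkm' 2) (by positivity)
    have hB : (k:ℤ)^2 * (m:ℤ)^2 ≤ (k:ℤ)^2 * ((m:ℤ)+1)^2 :=
      mul_le_mul_of_nonneg_left (pow_le_pow_left₀ (le_of_lt hM) (by linarith) 2) (by positivity)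
    have hnum : ((u:ℤ)+1) * ((k:ℤ)+(t:ℤ)+1) * (m:ℤ)^2
        ≤ ((w:ℤ)+1) * ((m:ℤ)+((t:ℤ)+1)+1) * (k:ℤ)^2 := by
      have e1' : ((u:ℤ)+1) = (k:ℤ)-((t:ℤ)+1) := by linarith [hkeq]
      have e2' : ((w:ℤ)+1) = (m:ℤ)-((t:ℤ)+1)+1 := by linarith [hmeq]
      rw [e1', e2']
      linarith [hA, hB]
    have hW : (0:ℤ) < ((m:ℤ)+((t:ℤ)+1)+1) * (k:ℤ) * (((k:ℤ)+(t:ℤ)+1) * (m:ℤ)) := by positivity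
    have hchain : aa k m u * (((m:ℤ)+((t:ℤ)+1)+1) * (k:ℤ) * (((k:ℤ)+(t:ℤ)+1) * (m:ℤ)))
        < aa k m (k+t+1) * (((m:ℤ)+((t:ℤ)+1)+1) * (k:ℤ) * (((k:ℤ)+(t:ℤ)+1) * (m:ℤ))) := by
      have lhs_eq : aa k m u * (((m:ℤ)+((t:ℤ)+1)+1) * (k:ℤ) * (((k:ℤ)+(t:ℤ)+1) * (m:ℤ)))
          = aa k m (u+1) * (((u:ℤ)+1) * (((k:ℤ)+(t:ℤ)+1) * (m:ℤ)^2)) := by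
        linear_combination (-(((k:ℤ)+(t:ℤ)+1) * (m:ℤ))) * r1'
      have rhs_eq : aa k m (k+t+1) * (((m:ℤ)+((t:ℤ)+1)+1) * (k:ℤ) * (((k:ℤ)+(t:ℤ)+1) * (m:ℤ)))
          = aa k m (k+t) * (((w:ℤ)+1) * (((m:ℤ)+((t:ℤ)+1)+1) * (k:ℤ)^2)) := by
        linear_combination (((m:ℤ)+((t:ℤ)+1)+1) * (k:ℤ)) * r2'
      rw [lhs_eq, rhs_eq]
      calc aa k m (u+1) * (((u:ℤ)+1) * (((k:ℤ)+(t:ℤ)+1) * (m:ℤ)^2))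
          ≤ aa k m (u+1) * (((w:ℤ)+1) * (((m:ℤ)+((t:ℤ)+1)+1) * (k:ℤ)^2)) := by
            apply mul_le_mul_of_nonneg_left _ (le_of_lt hxpos)
            linarith [hnum]
        _ < aa k m (k+t) * (((w:ℤ)+1) * (((m:ℤ)+((t:ℤ)+1)+1) * (k:ℤ)^2)) := by
            apply mul_lt_mul_of_pos_right hprev
            positivity
    show aa k m u < aa k m (k+t+1)
    exact lt_of_mul_lt_mul_right hchain (le_of_lt hW)

def LL (k m i : ℕ) : ℤ := if i ≤ k then aa k m (k-i) else 0
def RR (k m i : ℕ) : ℤ := aa k m (k+i)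

lemma LL_nonneg (k m i : ℕ) : 0 ≤ LL k m i := by
  unfold LL; split
  · exact aa_nonneg k m _
  · exact le_refl 0

lemma sum_LL (k m : ℕ) (hk : 1 ≤ k) (hkm : k ≤ m) :
    ∑ i ∈ Ico 1 (m+1), LL k m i = ∑ j ∈ range k, aa k m j := by
  rw [← sum_Ico_consecutive (LL k m) (show 1 ≤ k+1 by omega) (show k+1 ≤ m+1 by omega)]
  have h2 : ∑ i ∈ Ico (k+1) (m+1), LL k m i = 0 := by
    apply Finset.sum_eq_zero
    intro i hi
    have : ¬ i ≤ k := by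
      have := (Finset.mem_Ico.mp hi).1; omega
    simp [LL, this]
  rw [h2, add_zero]
  rw [sum_Ico_eq_sum_range]
  have h3 : ∀ t ∈ range (k+1-1), LL k m (1+t) = aa k m (k-1-t) := by
    intro t ht
    have ht' : t < k := by simpa using ht
    have : 1 + t ≤ k := by omega
    simp only [LL, if_pos this]
    congr 1
    omega
  rw [Finset.sum_congr rfl h3]
  have h4 : k + 1 - 1 = k := by omega
  rw [h4]
  exact Finset.sum_range_reflect (aa k m) k

lemma sum_RR (k m : ℕ) :
    ∑ i ∈ Ico 1 (m+1), RR k m i = ∑ j ∈ Ico (k+1) (k+m+1), aa k m j := by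
  rw [sum_Ico_eq_sum_range, sum_Ico_eq_sum_range]
  have e1 : m + 1 - 1 = m := by omega
  have e2 : k + m + 1 - (k+1) = m := by omega
  rw [e1, e2]
  apply Finset.sum_congr rfl
  intro t _
  simp only [RR]
  congr 1
  omega

lemma moments (k m : ℕ) (hk : 1 ≤ k) (hkm : k ≤ m) :
    ∑ i ∈ Ico 1 (m+1), (i:ℤ) * LL k m i = ∑ i ∈ Ico 1 (m+1), (i:ℤ) * RR k m i := by
  -- LHS = ∑_{j<k} (k-j) aa j
  have hL : ∑ i ∈ Ico 1 (m+1), (i:ℤ) * LL k m i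
      = ∑ j ∈ range k, ((k:ℤ) - (j:ℤ)) * aa k m j := by
    rw [← sum_Ico_consecutive (fun i => (i:ℤ) * LL k m i)
      (show 1 ≤ k+1 by omega) (show k+1 ≤ m+1 by omega)]
    have h2 : ∑ i ∈ Ico (k+1) (m+1), (i:ℤ) * LL k m i = 0 := by
      apply Finset.sum_eq_zero
      intro i hi
      have : ¬ i ≤ k := by have := (Finset.mem_Ico.mp hi).1; omega
      simp [LL, this]
    rw [h2, add_zero, sum_Ico_eq_sum_range]
    have h4 : k + 1 - 1 = k := by omega
    rw [h4]
    rw [← Finset.sum_range_reflect (fun j => ((k:ℤ) - (j:ℤ)) * aa k m j) k]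
    apply Finset.sum_congr rfl
    intro t ht
    have ht' : t < k := by simpa using ht
    have h1t : 1 + t ≤ k := by omega
    simp only [LL, if_pos h1t]
    have e1 : k - (1+t) = k-1-t := by omega
    rw [e1]
    have e2 : ((k-1-t : ℕ) : ℤ) = (k:ℤ) - 1 - (t:ℤ) := by omega
    rw [e2]
    push_cast
    ring
  -- RHS = ∑_{j=k+1}^{n} (j-k) aa j
  have hR : ∑ i ∈ Ico 1 (m+1), (i:ℤ) * RR k m i
      = ∑ j ∈ Ico (k+1) (k+m+1), ((j:ℤ) - (k:ℤ)) * aa k m j := by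
    rw [sum_Ico_eq_sum_range, sum_Ico_eq_sum_range]
    have e1 : m + 1 - 1 = m := by omega
    have e2 : k + m + 1 - (k+1) = m := by omega
    rw [e1, e2]
    apply Finset.sum_congr rfl
    intro t _
    simp only [RR]
    have e3 : k + (1+t) = k+1+t := by omega
    rw [e3]
    push_cast
    ring
  rw [hL, hR]
  -- mean identity
  have hmean : ∑ j ∈ range (k+m+1), ((k:ℤ) - (j:ℤ)) * aa k m j = 0 := by
    have h1 := aa_total k m
    have h2 := aa_mean k m hk
    have : ∑ j ∈ range (k+m+1), ((k:ℤ) - (j:ℤ)) * aa k m j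
        = (k:ℤ) * (∑ j ∈ range (k+m+1), aa k m j)
          - ∑ j ∈ range (k+m+1), (j:ℤ) * aa k m j := by
      rw [Finset.mul_sum, ← Finset.sum_sub_distrib]
      apply Finset.sum_congr rfl
      intro j _
      ring
    rw [this, h1, h2]
    ring
  -- split range (k+m+1) = range k ∪ {k} ∪ Ico (k+1) (k+m+1)
  have hsplit : ∑ j ∈ range (k+m+1), ((k:ℤ) - (j:ℤ)) * aa k m j
      = (∑ j ∈ range k, ((k:ℤ) - (j:ℤ)) * aa k m j)
        + ∑ j ∈ Ico (k+1) (k+m+1), ((k:ℤ) - (j:ℤ)) * aa k m j := by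
    rw [Finset.range_eq_Ico]
    rw [← sum_Ico_consecutive (fun j => ((k:ℤ) - (j:ℤ)) * aa k m j)
      (show 0 ≤ k by omega) (show k ≤ k+m+1 by omega)]
    rw [← sum_Ico_consecutive (fun j => ((k:ℤ) - (j:ℤ)) * aa k m j)
      (show k ≤ k+1 by omega) (show k+1 ≤ k+m+1 by omega)]
    have : ∑ j ∈ Ico k (k+1), ((k:ℤ) - (j:ℤ)) * aa k m j = 0 := by
      have : Ico k (k+1) = {k} := by
        ext x; simp only [Finset.mem_Ico, Finset.mem_singleton]; omega
      rw [this, Finset.sum_singleton]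
      ring
    rw [this]
    rw [Finset.range_eq_Ico]; ring
  rw [hsplit] at hmean
  have : ∑ j ∈ Ico (k+1) (k+m+1), ((j:ℤ) - (k:ℤ)) * aa k m j
      = - ∑ j ∈ Ico (k+1) (k+m+1), ((k:ℤ) - (j:ℤ)) * aa k m j := by
    rw [← Finset.sum_neg_distrib]
    apply Finset.sum_congr rfl
    intro j _
    ring
  rw [this]
  linarith [hmean]

lemma claimA (k m : ℕ) (hk : 1 ≤ k) (hkm : k ≤ m) :
    ∑ j ∈ Ico (k+1) (k+m+1), aa k m j ≤ ∑ j ∈ range k, aa k m j := by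
  have hm : 1 ≤ m := le_trans hk hkm
  rw [← sum_LL k m hk hkm, ← sum_RR k m]
  by_cases hs : ∃ i ∈ Ico 1 (m+1), LL k m i < RR k m i
  case neg =>
    push_neg at hs
    exact Finset.sum_le_sum hs
  case pos =>
    set s := (Ico 1 (m+1)).filter (fun i => LL k m i < RR k m i) with hs_def
    have hsne : s.Nonempty := by
      obtain ⟨i, hi1, hi2⟩ := hs
      exact ⟨i, Finset.mem_filter.mpr ⟨hi1, hi2⟩⟩
    set f := s.min' hsne with hf_def
    have hf_mem : f ∈ s := Finset.min'_mem s hsne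
    have hf_Ico : f ∈ Ico 1 (m+1) := (Finset.mem_filter.mp hf_mem).1
    have hf1 : 1 ≤ f := (Finset.mem_Ico.mp hf_Ico).1
    have hfm : f ≤ m := by have := (Finset.mem_Ico.mp hf_Ico).2; omega
    have hf_lt : LL k m f < RR k m f := (Finset.mem_filter.mp hf_mem).2
    have hmin : ∀ i, 1 ≤ i → i < f → RR k m i ≤ LL k m i := by
      intro i hi1 hif
      by_contra hcon
      push_neg at hcon
      have : i ∈ s := Finset.mem_filter.mpr
        ⟨Finset.mem_Ico.mpr ⟨hi1, by omega⟩, hcon⟩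
      have := Finset.min'_le s i this
      omega
    have hf2 : 2 ≤ f := by
      rcases Nat.lt_or_ge f 2 with h | h
      · exfalso
        have hf1' : f = 1 := by omega
        have : RR k m 1 ≤ LL k m 1 := by
          simp only [LL, RR, if_pos hk]
          exact pair_one k m hk hkm
        rw [hf1'] at hf_lt
        omega
      · exact h
    -- sign condition above f
    have hS2 : ∀ i, f ≤ i → i ≤ m → LL k m i ≤ RR k m i := by
      by_cases hfk : f ≤ k
      · -- Q (f-1) holds
        have hQf : QA k m (f-1) := by
          by_contra hq
          have hj1 : 1 ≤ f - 1 := by omega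
          have hjk : (f-1) + 1 ≤ k := by omega
          have hle : aa k m (k+(f-1)) ≤ aa k m (k-(f-1)) := by
            have h1 := hmin (f-1) hj1 (by omega)
            simp only [LL, RR, if_pos (show f-1 ≤ k by omega)] at h1
            exact h1
          have h2 := revA k m (f-1) hk hkm hj1 hjk hq hle
          have e1 : k + (f-1) + 1 = k + f := by omega
          have e2 : k - (f-1) - 1 = k - f := by omega
          rw [e1, e2] at h2
          have h3 : LL k m f = aa k m (k-f) := by simp only [LL, if_pos hfk]
          have h4 : RR k m f = aa k m (k+f) := rfl
          omega
        intro i hfi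
        induction i, hfi using Nat.le_induction with
        | base => intro _; exact le_of_lt hf_lt
        | succ n hn ih =>
          intro hnm
          by_cases hnk : n + 1 ≤ k
          · have h1 : LL k m n ≤ RR k m n := ih (by omega)
            have h1' : aa k m (k-n) ≤ aa k m (k+n) := by
              simpa only [LL, RR, if_pos (show n ≤ k by omega)] using h1
            have hq : QA k m n := QA_mono k m (f-1) n hkm (by omega) hQf
            have h2 := stepA k m n hk hkm (by omega) hnk hq h1'
            simp only [LL, RR, if_pos hnk]
            have e1 : k - (n+1) = k - n - 1 := by omega
            rw [e1]
            exact h2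
          · simp only [LL, if_neg hnk]
            exact aa_nonneg k m _
      · intro i hfi him
        have : ¬ i ≤ k := by omega
        simp only [LL, if_neg this]
        exact aa_nonneg k m _
    -- the rearrangement trick
    set i0 := f - 1 with hi0
    have hi01 : 1 ≤ i0 := by omega
    have key : 0 ≤ ∑ i ∈ Ico 1 (m+1), ((i0:ℤ) - (i:ℤ)) * (LL k m i - RR k m i) := by
      rw [← sum_Ico_consecutive (fun i => ((i0:ℤ) - (i:ℤ)) * (LL k m i - RR k m i))
        (show 1 ≤ f by omega) (show f ≤ m+1 by omega)]
      apply add_nonneg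
      · apply Finset.sum_nonneg
        intro i hi
        obtain ⟨hi1, hi2⟩ := Finset.mem_Ico.mp hi
        apply mul_nonneg
        · have : (i:ℤ) ≤ (i0:ℤ) := by
            have : i ≤ i0 := by omega
            exact_mod_cast this
          linarith
        · linarith [hmin i hi1 hi2]
      · apply Finset.sum_nonneg
        intro i hi
        obtain ⟨hi1, hi2⟩ := Finset.mem_Ico.mp hi
        have ha : (i0:ℤ) - (i:ℤ) ≤ 0 := by
          have : i0 ≤ i := by omega
          have : (i0:ℤ) ≤ (i:ℤ) := by exact_mod_cast this
          linarith
        have hb : LL k m i - RR k m i ≤ 0 := by linarith [hS2 i hi1 (by omega)]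
        nlinarith [ha, hb]
    have expand : ∑ i ∈ Ico 1 (m+1), ((i0:ℤ) - (i:ℤ)) * (LL k m i - RR k m i)
        = (i0:ℤ) * ((∑ i ∈ Ico 1 (m+1), LL k m i) - ∑ i ∈ Ico 1 (m+1), RR k m i)
          - ((∑ i ∈ Ico 1 (m+1), (i:ℤ) * LL k m i)
            - ∑ i ∈ Ico 1 (m+1), (i:ℤ) * RR k m i) := by
      have h1 : ∀ i ∈ Ico 1 (m+1), ((i0:ℤ) - (i:ℤ)) * (LL k m i - RR k m i)
          = ((i0:ℤ)*LL k m i - (i0:ℤ)*RR k m i) - ((i:ℤ)*LL k m i - (i:ℤ)*RR k m i) := by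
        intro i _; ring
      rw [Finset.sum_congr rfl h1, Finset.sum_sub_distrib, Finset.sum_sub_distrib,
        Finset.sum_sub_distrib, ← Finset.mul_sum, ← Finset.mul_sum]
      ring
    rw [expand, moments k m hk hkm, sub_self, sub_zero] at key
    have hi0' : (0:ℤ) < (i0:ℤ) := by exact_mod_cast hi01
    nlinarith [key, hi0']

/-- claim B: strict domination of the upper part, for `k ≤ m`. -/
lemma claimB (k m : ℕ) (hk : 1 ≤ k) (hkm : k ≤ m) :
    ∑ j ∈ range k, aa k m j < ∑ j ∈ Ico k (k+m+1), aa k m j := by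
  have h1 : ∑ j ∈ range k, aa k m j = ∑ t ∈ range k, aa k m (k-1-t) :=
    (Finset.sum_range_reflect (aa k m) k).symm
  have h2 : ∑ t ∈ range k, aa k m (k-1-t) < ∑ t ∈ range k, aa k m (k+t) := by
    apply Finset.sum_lt_sum_of_nonempty
    · exact Finset.nonempty_range_iff.mpr (by omega)
    · intro t ht
      exact pairB k m hk hkm t (Finset.mem_range.mp ht)
  have h3 : ∑ t ∈ range k, aa k m (k+t) = ∑ j ∈ Ico k (2*k), aa k m j := by
    rw [sum_Ico_eq_sum_range]
    have : 2*k - k = k := by omega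
    rw [this]
  have h4 : ∑ j ∈ Ico k (2*k), aa k m j ≤ ∑ j ∈ Ico k (k+m+1), aa k m j := by
    apply Finset.sum_le_sum_of_subset_of_nonneg
    · apply Finset.Ico_subset_Ico le_rfl
      omega
    · intro j _ _
      exact aa_nonneg k m j
  omega

lemma aa_symm (k m j : ℕ) (hj : j ≤ k+m) : aa m k j = aa k m (k+m-j) := by
  unfold aa
  have h1 : (m+k).choose j = (k+m).choose (k+m-j) := by
    rw [Nat.add_comm m k]
    exact (Nat.choose_symm hj).symm
  have h2 : m + k - j = k + m - j := by omega
  have h3 : k + m - (k+m-j) = j := by omega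
  rw [h1, h2, h3]
  ring

/-- the core inequality: `n^n < 2 ∑_{j ≤ k} a_j`. -/
lemma core (k m : ℕ) (hk : 1 ≤ k) :
    ((k+m:ℕ):ℤ)^(k+m) < 2 * ∑ j ∈ range (k+1), aa k m j := by
  rcases Nat.eq_zero_or_pos m with hm | hm
  · subst hm
    have h := aa_total k 0
    rw [h]
    have : (0:ℤ) < ((k+0:ℕ):ℤ)^(k+0) := by
      have : (0:ℤ) < ((k+0:ℕ):ℤ) := by exact_mod_cast hk
      positivity
    linarith
  · -- split the total sum
    have hsplit : ((k+m:ℕ):ℤ)^(k+m)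
        = (∑ j ∈ range (k+1), aa k m j) + ∑ j ∈ Ico (k+1) (k+m+1), aa k m j := by
      rw [← aa_total k m, Finset.range_eq_Ico,
        ← sum_Ico_consecutive (aa k m) (show 0 ≤ k+1 by omega) (show k+1 ≤ k+m+1 by omega)]
      rw [Finset.range_eq_Ico]
    rcases le_or_gt k m with hkm | hmk
    · -- use claim A
      have hA := claimA k m hk hkm
      have hak : 0 < aa k m k := aa_pos k m k hk hm (by omega)
      have h5 : ∑ j ∈ range (k+1), aa k m j = (∑ j ∈ range k, aa k m j) + aa k m k :=
        Finset.sum_range_succ (aa k m) k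
      omega
    · -- use claim B with roles of k and m swapped
      have hB := claimB m k hm (le_of_lt hmk)
      -- translate both sums
      have hL : ∑ j ∈ range m, aa m k j = ∑ j ∈ Ico (k+1) (k+m+1), aa k m j := by
        have e1 : ∀ j ∈ range m, aa m k j = aa k m (k+m-j) := by
          intro j hj
          exact aa_symm k m j (by have := Finset.mem_range.mp hj; omega)
        rw [Finset.sum_congr rfl e1]
        rw [← Finset.sum_range_reflect (fun j => aa k m (k+m-j)) m]
        rw [sum_Ico_eq_sum_range]
        have e2 : k+m+1-(k+1) = m := by omega
        rw [e2]
        apply Finset.sum_congr rfl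
        intro t ht
        have ht' : t < m := Finset.mem_range.mp ht
        congr 1
        omega
      have hR : ∑ j ∈ Ico m (m+k+1), aa m k j = ∑ j ∈ range (k+1), aa k m j := by
        have e0 : ∑ j ∈ Ico m (m+k+1), aa m k j = ∑ t ∈ range (k+1), aa m k (m+t) := by
          rw [sum_Ico_eq_sum_range]
          have : m+k+1-m = k+1 := by omega
          rw [this]
        rw [e0]
        have e1 : ∀ t ∈ range (k+1), aa m k (m+t) = aa k m (k-t) := by
          intro t ht
          have ht' : t < k+1 := Finset.mem_range.mp ht
          rw [aa_symm k m (m+t) (by omega)]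
          congr 1
          omega
        rw [Finset.sum_congr rfl e1]
        rw [← Finset.sum_range_reflect (aa k m) (k+1)]
        apply Finset.sum_congr rfl
        intro t ht
        have := Finset.mem_range.mp ht
        congr 1
      rw [hL, hR] at hB
      omega

/-- Binomial cumulative distribution function B_{z,k}(p). -/
noncomputable def binCDF (z k : ℕ) (p : ℝ) : ℝ :=
  ∑ j ∈ Finset.range (k + 1), (z.choose j : ℝ) * p ^ j * (1 - p) ^ (z - j)

theorem stmt_5 (k z : ℕ) (hk : 1 ≤ k) (hz : k ≤ z) :
    1 / 2 < binCDF z k ((k : ℝ) / (z : ℝ)) := by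
  set m := z - k with hm
  have hzkm : k + m = z := by omega
  have hz1 : 1 ≤ z := by omega
  have hzR : (0:ℝ) < (z:ℝ) := by exact_mod_cast hz1
  have hmcast : (m:ℝ) = (z:ℝ) - (k:ℝ) := by
    rw [hm]
    push_cast [Nat.cast_sub hz]
    ring
  have hterm : ∀ j ∈ range (k+1),
      (z.choose j : ℝ) * ((k:ℝ)/(z:ℝ))^j * (1 - (k:ℝ)/(z:ℝ))^(z-j)
        = (aa k m j : ℝ) / (z:ℝ)^z := by
    intro j hj
    have hjk : j ≤ k := by have := Finset.mem_range.mp hj; omega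
    have hjz : j ≤ z := le_trans hjk hz
    have h1 : (1:ℝ) - (k:ℝ)/(z:ℝ) = (m:ℝ)/(z:ℝ) := by
      rw [hmcast]
      field_simp
    rw [h1, div_pow, div_pow]
    have hzz : (z:ℝ)^j * (z:ℝ)^(z-j) = (z:ℝ)^z := by
      rw [← pow_add]
      congr 1
      omega
    have haa : (aa k m j : ℝ) = (z.choose j : ℝ) * (k:ℝ)^j * (m:ℝ)^(z-j) := by
      unfold aa
      push_cast [hzkm]
      ring
    rw [haa]
    field_simp
    rw [← hzz]; ring
  have hsum : binCDF z k ((k:ℝ)/(z:ℝ))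
      = ((∑ j ∈ range (k+1), aa k m j : ℤ) : ℝ) / (z:ℝ)^z := by
    unfold binCDF
    rw [Finset.sum_congr rfl hterm, ← Finset.sum_div]
    push_cast
    rfl
  rw [hsum]
  rw [div_lt_div_iff₀ (by norm_num) (by positivity)]
  have hcore := core k m hk
  rw [hzkm] at hcore
  have : ((z:ℕ):ℝ)^z < 2 * ((∑ j ∈ range (k+1), aa k m j : ℤ) : ℝ) := by
    exact_mod_cast hcore
  linarith

end BinomialMedian
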